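/- For 0 < α < 1, ħ > 0 and θ ∈ ℝⁿ, there is a constant C depending only on α and n such that | |2πθ|^{2α} − ħ^{-2α} |2 sin(πħθ)|^{2α} | ≤ C ħ^{2α} |θ|^{4α}, where |2 sin(πħθ)|^{2α} := (∑_{j=1}^n 4 sin²(πħθ_j))^α and |2πθ|^{2α} := (∑_{j=1}^n 4π²θ_j²)^α. -/

import Mathlib

open scoped BigOperators NNReal

private lemma sinsq_bound (x : ℝ) : |Real.sin x ^ 2 - x ^ 2| ≤ 2 * x ^ 4 := by
  have h1 : Real.sin x ^ 2 ≤ x ^ 2 := Real.sin_sq_le_sq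
  rw [abs_sub_comm, abs_of_nonneg (sub_nonneg.2 h1)]
  -- reduce to nonnegative x
  have key : ∀ y : ℝ, 0 ≤ y → y ^ 2 - Real.sin y ^ 2 ≤ 2 * y ^ 4 := by
    intro y hy
    rcases le_or_gt y 1 with hy1 | hy1
    · rcases eq_or_lt_of_le hy with h0 | h0
      · simp [← h0]
      · have hs1 : Real.sin y ≤ y := Real.sin_le hy
        have hs2 : y - y ^ 3 / 4 < Real.sin y := by
          have := Real.sin_gt_sub_cube h0; nlinarith [pow_pos h0 3]
        have hsn : 0 ≤ Real.sin y := Real.sin_nonneg_of_nonneg_of_le_pi hy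
          (hy1.trans (by linarith [Real.pi_gt_three]))
        nlinarith [sq_nonneg y, sq_nonneg (y - Real.sin y), pow_pos h0 4]
    · have h2 : (1 : ℝ) ≤ y ^ 2 := one_le_pow₀ hy1.le
      have h3 : Real.sin y ^ 2 ≥ 0 := sq_nonneg _
      nlinarith
  calc x ^ 2 - Real.sin x ^ 2 = |x| ^ 2 - Real.sin |x| ^ 2 := by
        rcases abs_choice x with h | h <;> rw [h] <;> simp [Real.sin_neg] <;> ring
    _ ≤ 2 * |x| ^ 4 := key _ (abs_nonneg x)
    _ = 2 * x ^ 4 := by rcases abs_choice x with h | h <;> rw [h] <;> ring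

private lemma holder_rpow {s t α : ℝ} (hs : 0 ≤ s) (ht : 0 ≤ t) (hα : 0 ≤ α) (hα1 : α ≤ 1) :
    |s ^ α - t ^ α| ≤ |s - t| ^ α := by
  have sub : ∀ a b : ℝ, 0 ≤ a → 0 ≤ b → (a + b) ^ α ≤ a ^ α + b ^ α := by
    intro a b ha hb
    have := NNReal.rpow_add_le_add_rpow a.toNNReal b.toNNReal hα hα1
    have h' : ((a.toNNReal + b.toNNReal : ℝ≥0) : ℝ) ^ α
        ≤ ((a.toNNReal : ℝ)) ^ α + ((b.toNNReal : ℝ)) ^ α := by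
      calc ((a.toNNReal + b.toNNReal : ℝ≥0) : ℝ) ^ α
          = (((a.toNNReal + b.toNNReal) ^ α : ℝ≥0) : ℝ) := by
            rw [NNReal.coe_rpow]
        _ ≤ (((a.toNNReal ^ α + b.toNNReal ^ α) : ℝ≥0) : ℝ) := by exact_mod_cast this
        _ = ((a.toNNReal : ℝ)) ^ α + ((b.toNNReal : ℝ)) ^ α := by
            simp [NNReal.coe_rpow]
    simpa [Real.coe_toNNReal a ha, Real.coe_toNNReal b hb, Real.toNNReal_add ha hb] using h'
  have main : ∀ s t : ℝ, 0 ≤ s → 0 ≤ t → t ≤ s → s ^ α - t ^ α ≤ (s - t) ^ α := by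
    intro s t hs ht hts
    have := sub (s - t) t (by linarith) ht
    have h2 : s ^ α ≤ (s - t) ^ α + t ^ α := by
      simpa [sub_add_cancel] using this
    linarith
  rcases le_total t s with h | h
  · rw [abs_of_nonneg (sub_nonneg.2 (Real.rpow_le_rpow ht h hα)),
      abs_of_nonneg (sub_nonneg.2 h)]
    exact main s t hs ht h
  · rw [abs_sub_comm, abs_of_nonneg (sub_nonneg.2 (Real.rpow_le_rpow hs h hα)),
      abs_sub_comm, abs_of_nonneg (sub_nonneg.2 h)]
    exact main t s ht hs h

/-- For `0 < α < 1` and `n`, there is a constant `C` depending only on `α` and `n` such that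
for all `ℏ > 0` and `θ ∈ ℝⁿ`,
`| (∑ 4π²θⱼ²)^α − ℏ^{-2α} (∑ 4 sin²(πℏθⱼ))^α | ≤ C ℏ^{2α} (∑ θⱼ²)^{2α}`. -/
theorem symbol_approximation (α : ℝ) (hα : 0 < α) (hα1 : α < 1) (n : ℕ) :
    ∃ C : ℝ, 0 < C ∧ ∀ (hbar : ℝ), 0 < hbar → ∀ θ : Fin n → ℝ,
      |(∑ j, 4 * Real.pi ^ 2 * θ j ^ 2) ^ α -
          hbar ^ (-(2 * α)) * (∑ j, 4 * Real.sin (Real.pi * hbar * θ j) ^ 2) ^ α| ≤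
        C * hbar ^ (2 * α) * (∑ j, θ j ^ 2) ^ (2 * α) := by
  have hπ := Real.pi_pos
  refine ⟨(8 * Real.pi ^ 4) ^ α, Real.rpow_pos_of_pos (by positivity) α, ?_⟩
  intro hbar hb θ
  set S : ℝ := ∑ j, 4 * Real.pi ^ 2 * θ j ^ 2 with hS
  set T : ℝ := ∑ j, 4 * Real.sin (Real.pi * hbar * θ j) ^ 2 with hT
  set X : ℝ := ∑ j, θ j ^ 2 with hX
  have hSpos : 0 ≤ S := Finset.sum_nonneg fun j _ => by positivity
  have hTpos : 0 ≤ T := Finset.sum_nonneg fun j _ => by positivity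
  have hXpos : 0 ≤ X := Finset.sum_nonneg fun j _ => sq_nonneg _
  -- step 1: rewrite S^α = ħ^{-2α} (ħ²S)^α
  have hb2 : (0:ℝ) < hbar ^ 2 := by positivity
  have hrw : S ^ α = hbar ^ (-(2*α)) * (hbar ^ 2 * S) ^ α := by
    rw [Real.mul_rpow hb2.le hSpos]
    have : (hbar ^ 2 : ℝ) ^ α = hbar ^ (2*α) := by
      rw [← Real.rpow_natCast hbar 2, ← Real.rpow_mul hb.le]
      norm_num
    rw [this, ← mul_assoc, ← Real.rpow_add hb]
    simp
  -- step 2: Hölder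
  have hstep : |(hbar ^ 2 * S) ^ α - T ^ α| ≤ |hbar ^ 2 * S - T| ^ α :=
    holder_rpow (by positivity) hTpos hα.le hα1.le
  -- step 3: pointwise bound
  have hdiff : |hbar ^ 2 * S - T| ≤ 8 * Real.pi ^ 4 * hbar ^ 4 * X ^ 2 := by
    have h1 : hbar ^ 2 * S - T
        = ∑ j, 4 * ((Real.pi * hbar * θ j) ^ 2 - Real.sin (Real.pi * hbar * θ j) ^ 2) := by
      rw [hS, hT, Finset.mul_sum, ← Finset.sum_sub_distrib]
      congr 1; ext j; ring
    rw [h1]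
    calc |∑ j, 4 * ((Real.pi * hbar * θ j) ^ 2 - Real.sin (Real.pi * hbar * θ j) ^ 2)|
        ≤ ∑ j, |4 * ((Real.pi * hbar * θ j) ^ 2 - Real.sin (Real.pi * hbar * θ j) ^ 2)| :=
          Finset.abs_sum_le_sum_abs _ _
      _ ≤ ∑ j, 8 * Real.pi ^ 4 * hbar ^ 4 * θ j ^ 4 := by
          apply Finset.sum_le_sum
          intro j _
          rw [abs_mul]
          have := sinsq_bound (Real.pi * hbar * θ j)
          rw [abs_sub_comm] at this
          calc |(4:ℝ)| * |(Real.pi * hbar * θ j) ^ 2 - Real.sin (Real.pi * hbar * θ j) ^ 2|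
              ≤ 4 * (2 * (Real.pi * hbar * θ j) ^ 4) := by
                rw [abs_of_nonneg (by norm_num : (0:ℝ) ≤ 4)]
                exact mul_le_mul_of_nonneg_left this (by norm_num)
            _ = 8 * Real.pi ^ 4 * hbar ^ 4 * θ j ^ 4 := by ring
      _ = 8 * Real.pi ^ 4 * hbar ^ 4 * ∑ j, θ j ^ 4 := by rw [Finset.mul_sum]
      _ ≤ 8 * Real.pi ^ 4 * hbar ^ 4 * X ^ 2 := by
          apply mul_le_mul_of_nonneg_left _ (by positivity)
          have h4 : ∀ j : Fin n, θ j ^ 4 = (θ j ^ 2) ^ 2 := fun j => by ring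
          simp_rw [h4, hX]
          exact Finset.sum_sq_le_sq_sum_of_nonneg fun j _ => sq_nonneg _
  -- assemble
  have hpow : |hbar ^ 2 * S - T| ^ α ≤ (8 * Real.pi ^ 4) ^ α * hbar ^ (4 * α) * X ^ (2 * α) := by
    calc |hbar ^ 2 * S - T| ^ α ≤ (8 * Real.pi ^ 4 * hbar ^ 4 * X ^ 2) ^ α :=
          Real.rpow_le_rpow (abs_nonneg _) hdiff hα.le
      _ = (8 * Real.pi ^ 4) ^ α * hbar ^ (4 * α) * X ^ (2 * α) := by
          rw [Real.mul_rpow (by positivity) (by positivity),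
            Real.mul_rpow (by positivity) (by positivity)]
          congr 1
          · congr 1
            rw [← Real.rpow_natCast hbar 4, ← Real.rpow_mul hb.le]
            norm_num
          · rw [← Real.rpow_natCast X 2, ← Real.rpow_mul hXpos]
            norm_num
  calc |S ^ α - hbar ^ (-(2 * α)) * T ^ α|
      = hbar ^ (-(2 * α)) * |(hbar ^ 2 * S) ^ α - T ^ α| := by
        rw [hrw, ← mul_sub, abs_mul,
          abs_of_nonneg (Real.rpow_nonneg hb.le _)]
    _ ≤ hbar ^ (-(2 * α)) * ((8 * Real.pi ^ 4) ^ α * hbar ^ (4 * α) * X ^ (2 * α)) := by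
        exact mul_le_mul_of_nonneg_left (hstep.trans hpow) (Real.rpow_nonneg hb.le _)
    _ = (8 * Real.pi ^ 4) ^ α * hbar ^ (2 * α) * X ^ (2 * α) := by
        rw [show hbar ^ (-(2*α)) * ((8 * Real.pi ^ 4) ^ α * hbar ^ (4 * α) * X ^ (2 * α))
            = (8 * Real.pi ^ 4) ^ α * (hbar ^ (-(2*α)) * hbar ^ (4 * α)) * X ^ (2 * α) by ring,
          ← Real.rpow_add hb, show -(2*α) + 4*α = 2*α by ring]
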